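/- Let a ∈ ℝ^m, n, ν ∈ ℝ^d with |n| = |ν| = 1 and n·ν = 0. For h ∈ (0,1) define the region R₊ = {z ∈ ℝ^d : |z| < 1 − √h, z·ν > √h, 0 < z·n < h}. Then the d-dimensional Lebesgue measure of R₊ satisfies |R₊| = h·ω_{d−1}/2 + O(h^{3/2}) as h → 0, where ω_{d−1} is the volume of the unit ball in ℝ^{d−1}; precisely, |vol(R₊) − h·ω_{d−1}/2| ≤ C·h^{3/2} for some constant C depending only on d. -/

import Mathlib

open MeasureTheory RealInnerProductSpace

noncomputable section Stmt19Aux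

/-- Sum-of-squares ball in the pi space. -/
def ballS (j : ℕ) (ρ : ℝ) : Set (Fin j → ℝ) := {y | (∑ i, y i ^ 2) < ρ ^ 2}

theorem ballS_open (j : ℕ) (ρ : ℝ) : IsOpen (ballS j ρ) :=
  isOpen_lt (by continuity) continuous_const

theorem vol_ballS (j : ℕ) (ρ : ℝ) (hρ : 0 < ρ) :
    volume (ballS j ρ) = volume (Metric.ball (0 : EuclideanSpace ℝ (Fin j)) ρ) := by
  rw [← (EuclideanSpace.volume_preserving_symm_measurableEquiv_toLp (Fin j)).measure_preimage
    (ballS_open j ρ).measurableSet.nullMeasurableSet]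
  congr 1
  ext x
  simp only [Set.mem_preimage, ballS, Set.mem_setOf_eq, Metric.mem_ball, dist_zero_right]
  rw [EuclideanSpace.norm_eq, Real.sqrt_lt' hρ]
  have : ∀ i, ((MeasurableEquiv.toLp 2 (Fin j → ℝ)).symm x) i = x i := fun i => rfl
  simp [this, Real.norm_eq_abs, sq_abs]

theorem vol_ballS_ne_top (j : ℕ) (ρ : ℝ) (hρ : 0 < ρ) : volume (ballS j ρ) ≠ ⊤ := by
  rw [vol_ballS j ρ hρ]
  exact measure_ball_lt_top.ne

theorem halfvol (j : ℕ) (ρ : ℝ) :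
    volume {y : Fin (j+1) → ℝ | (∑ i, y i ^ 2) < ρ ^ 2 ∧ 0 < y 0} +
      volume {y : Fin (j+1) → ℝ | (∑ i, y i ^ 2) < ρ ^ 2 ∧ 0 < y 0} =
      volume (ballS (j+1) ρ) := by
  set P := {y : Fin (j+1) → ℝ | (∑ i, y i ^ 2) < ρ ^ 2 ∧ 0 < y 0} with hP
  set N := {y : Fin (j+1) → ℝ | (∑ i, y i ^ 2) < ρ ^ 2 ∧ y 0 < 0} with hN
  have hPopen : IsOpen P := by
    have : P = {y : Fin (j+1) → ℝ | (∑ i, y i ^ 2) < ρ ^ 2} ∩ {y | 0 < y 0} := rfl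
    rw [this]
    exact (isOpen_lt (by continuity) continuous_const).inter
      (isOpen_lt continuous_const (continuous_apply 0))
  have hNopen : IsOpen N := by
    have : N = {y : Fin (j+1) → ℝ | (∑ i, y i ^ 2) < ρ ^ 2} ∩ {y | y 0 < 0} := rfl
    rw [this]
    exact (isOpen_lt (by continuity) continuous_const).inter
      (isOpen_lt (continuous_apply 0) continuous_const)
  have hPN : volume N = volume P := by
    have hf : MeasurePreserving (fun (y : Fin (j+1) → ℝ) (i : Fin (j+1)) =>
        (if i = 0 then (fun t : ℝ => -t) else id) (y i)) volume volume := by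
      apply volume_preserving_pi
      intro i
      by_cases hi : i = 0 <;> simp [hi, Measure.measurePreserving_neg (volume : Measure ℝ),
        MeasurePreserving.id]
    have := hf.measure_preimage hNopen.measurableSet.nullMeasurableSet
    have hpre : (fun (y : Fin (j+1) → ℝ) (i : Fin (j+1)) =>
        (if i = 0 then (fun t : ℝ => -t) else id) (y i)) ⁻¹' N = P := by
      ext y
      simp only [Set.mem_preimage, hN, hP, Set.mem_setOf_eq]
      constructor
      · rintro ⟨h1, h2⟩
        refine ⟨?_, by simpa using h2⟩
        convert h1 using 2 with i
        by_cases hi : i = 0 <;> simp [hi]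
      · rintro ⟨h1, h2⟩
        refine ⟨?_, by simpa using h2⟩
        convert h1 using 2 with i
        by_cases hi : i = 0 <;> simp [hi]
    rw [hpre] at this
    exact this.symm
  have hdisj : Disjoint P N := by
    rw [Set.disjoint_left]
    rintro y ⟨_, h1⟩ ⟨_, h2⟩
    exact absurd (h1.trans h2) (lt_irrefl _)
  have hzero : volume {y : Fin (j+1) → ℝ | y 0 = 0} = 0 := by
    rw [volume_pi]
    exact Measure.pi_hyperplane _ 0 0
  have hsub : ballS (j+1) ρ ⊆ (P ∪ N) ∪ {y | y 0 = 0} := by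
    intro y hy
    rcases lt_trichotomy (y 0) 0 with h | h | h
    · exact Or.inl (Or.inr ⟨hy, h⟩)
    · exact Or.inr h
    · exact Or.inl (Or.inl ⟨hy, h⟩)
  have h1 : volume (ballS (j+1) ρ) ≤ volume P + volume N := by
    calc volume (ballS (j+1) ρ) ≤ volume ((P ∪ N) ∪ {y | y 0 = 0}) := measure_mono hsub
    _ ≤ volume (P ∪ N) + volume {y : Fin (j+1) → ℝ | y 0 = 0} := measure_union_le _ _
    _ = volume (P ∪ N) := by rw [hzero, add_zero]
    _ ≤ volume P + volume N := measure_union_le _ _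
  have h2 : volume P + volume N ≤ volume (ballS (j+1) ρ) := by
    rw [← measure_union hdisj hNopen.measurableSet]
    apply measure_mono
    rintro y (⟨h, _⟩ | ⟨h, _⟩) <;> exact h
  rw [hPN] at h1 h2
  exact le_antisymm h2 h1

theorem prodvol (j : ℕ) (A : Set ℝ) (B : Set (Fin j → ℝ)) (hA : MeasurableSet A)
    (hB : MeasurableSet B) :
    volume ((MeasurableEquiv.piFinSuccAbove (fun _ : Fin (j+1) => ℝ) 0) ⁻¹' (A ×ˢ B)) =
      volume A * volume B := by
  rw [(volume_preserving_piFinSuccAbove (fun _ : Fin (j+1) => ℝ) 0).measure_preimage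
    ((hA.prod hB).nullMeasurableSet), Measure.volume_eq_prod, Measure.prod_prod]

theorem piFinSuccAbove_zero_apply (j : ℕ) (x : Fin (j+1) → ℝ) :
    (MeasurableEquiv.piFinSuccAbove (fun _ : Fin (j+1) => ℝ) 0) x
      = (x 0, fun i => x i.succ) := by
  simp [MeasurableEquiv.piFinSuccAbove_apply, Fin.succAbove_zero]
  rfl

theorem vol_unit_ball (k : ℕ) (hk : 0 < k) :
    (volume (Metric.ball (0 : EuclideanSpace ℝ (Fin k)) 1)).toReal =
      Real.pi ^ ((k : ℝ) / 2) / Real.Gamma ((k : ℝ) / 2 + 1) := by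
  have : Nonempty (Fin k) := Fin.pos_iff_nonempty.mp hk
  rw [EuclideanSpace.volume_ball]
  have hg : 0 < Real.Gamma ((Fintype.card (Fin k) : ℝ) / 2 + 1) :=
    Real.Gamma_pos_of_pos (by positivity)
  rw [ENNReal.ofReal_one, one_pow, one_mul, ENNReal.toReal_ofReal
    (div_nonneg (pow_nonneg (Real.sqrt_nonneg _) _) hg.le)]
  rw [Fintype.card_fin]
  congr 1
  rw [Real.sqrt_eq_rpow, ← Real.rpow_natCast (Real.pi ^ ((1:ℝ)/2)) k,
    ← Real.rpow_mul Real.pi_pos.le]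
  ring_nf

theorem vol_ball_scale (k : ℕ) (hk : 0 < k) (ρ : ℝ) (hρ : 0 < ρ) :
    (volume (Metric.ball (0 : EuclideanSpace ℝ (Fin k)) ρ)).toReal =
      ρ ^ k * (volume (Metric.ball (0 : EuclideanSpace ℝ (Fin k)) 1)).toReal := by
  have : Nonempty (Fin k) := Fin.pos_iff_nonempty.mp hk
  rw [EuclideanSpace.volume_ball, EuclideanSpace.volume_ball, ENNReal.ofReal_one, one_pow,
    one_mul, ENNReal.toReal_mul, ENNReal.toReal_pow, ENNReal.toReal_ofReal hρ.le,
    Fintype.card_fin]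

end Stmt19Aux

theorem Dopen (j : ℕ) (ρ s : ℝ) :
    IsOpen {y : Fin (j+1) → ℝ | (∑ i, y i ^ 2) < ρ ^ 2 ∧ s < y 0} := by
  have : {y : Fin (j+1) → ℝ | (∑ i, y i ^ 2) < ρ ^ 2 ∧ s < y 0} =
      {y : Fin (j+1) → ℝ | (∑ i, y i ^ 2) < ρ ^ 2} ∩ {y | s < y 0} := rfl
  rw [this]
  exact (isOpen_lt (by continuity) continuous_const).inter
    (isOpen_lt continuous_const (continuous_apply 0))

set_option maxHeartbeats 2000000 in
theorem stmt19_key (m : ℕ) :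
    ∃ C : ℝ, ∀ (n ν : EuclideanSpace ℝ (Fin (m+2))),
      ‖n‖ = 1 → ‖ν‖ = 1 → ⟪n, ν⟫ = 0 →
      ∀ h ∈ Set.Ioo (0:ℝ) 1,
        |(volume {z : EuclideanSpace ℝ (Fin (m+2)) |
            ‖z‖ < 1 - Real.sqrt h ∧ Real.sqrt h < ⟪z, ν⟫ ∧
              0 < ⟪z, n⟫ ∧ ⟪z, n⟫ < h}).toReal -
          h * (Real.pi ^ ((((m+2:ℕ):ℝ) - 1) / 2) /
            Real.Gamma ((((m+2:ℕ):ℝ) - 1) / 2 + 1)) / 2| ≤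
        C * h ^ ((3:ℝ) / 2) := by
  set ω := (volume (Metric.ball (0 : EuclideanSpace ℝ (Fin (m+1))) 1)).toReal with hωdef
  set W := (volume (ballS m 1)).toReal with hWdef
  set Ω := (volume (Metric.ball (0 : EuclideanSpace ℝ (Fin (m+2))) 1)).toReal with hΩdef
  have hω0 : 0 ≤ ω := ENNReal.toReal_nonneg
  have hW0 : 0 ≤ W := ENNReal.toReal_nonneg
  have hΩ0 : 0 ≤ Ω := ENNReal.toReal_nonneg
  refine ⟨(((m:ℝ)+1)*ω + W) + 8*(Ω + ω), ?_⟩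
  intro n ν hn hν hnν h hmem
  obtain ⟨hh0, hh1⟩ := hmem
  have hωrw : Real.pi ^ ((((m+2:ℕ):ℝ) - 1) / 2) /
      Real.Gamma ((((m+2:ℕ):ℝ) - 1) / 2 + 1) = ω := by
    rw [hωdef, vol_unit_ball (m+1) (Nat.succ_pos m)]
    push_cast
    have e : ((m:ℝ)+2-1) = ((m:ℝ)+1) := by ring
    rw [e]
  rw [hωrw]
  -- orthonormal basis adapted to n, ν
  obtain ⟨b, hb0, hb1⟩ : ∃ b : OrthonormalBasis (Fin (m+2)) ℝ (EuclideanSpace ℝ (Fin (m+2))),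
      b 0 = n ∧ b 1 = ν := by
    set v : Fin (m+2) → EuclideanSpace ℝ (Fin (m+2)) :=
      fun i => if i = 0 then n else if i = 1 then ν else 0 with hv
    have horth : Orthonormal ℝ (({0, 1} : Set (Fin (m+2))).restrict v) := by
      rw [orthonormal_iff_ite]
      rintro ⟨i, hi⟩ ⟨j, hj⟩
      simp only [Set.mem_insert_iff, Set.mem_singleton_iff] at hi hj
      rcases hi with rfl | rfl <;> rcases hj with rfl | rfl <;>
        simp [hv, Set.restrict, Subtype.ext_iff, hnν, real_inner_comm n ν,
          real_inner_self_eq_norm_mul_norm, hn, hν, -PiLp.inner_apply]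
    obtain ⟨b, hb⟩ := horth.exists_orthonormalBasis_extension_of_card_eq
      (by simp [finrank_euclideanSpace_fin])
    refine ⟨b, ?_, ?_⟩
    · have := hb 0 (by simp); simpa [hv] using this
    · have := hb 1 (by simp); simpa [hv] using this
  set s := Real.sqrt h with hsdef
  have hs0 : 0 < s := Real.sqrt_pos.mpr hh0
  have hs1 : s < 1 := by
    rw [hsdef, show (1:ℝ) = Real.sqrt 1 by simp]
    exact Real.sqrt_lt_sqrt hh0.le hh1
  have hs2 : s ^ 2 = h := Real.sq_sqrt hh0.le
  -- reduce to coordinates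
  set T := {x : Fin (m+2) → ℝ | (∑ i, x i ^ 2) < (1 - s) ^ 2 ∧ s < x 1 ∧ 0 < x 0 ∧ x 0 < h}
    with hTdef
  have hTopen : IsOpen T := by
    have : T = {x : Fin (m+2) → ℝ | (∑ i, x i ^ 2) < (1 - s) ^ 2} ∩
        ({x | s < x 1} ∩ ({x | 0 < x 0} ∩ {x | x 0 < h})) := rfl
    rw [this]
    exact (isOpen_lt (by continuity) continuous_const).inter
      ((isOpen_lt continuous_const (continuous_apply 1)).inter
        ((isOpen_lt continuous_const (continuous_apply 0)).inter
          (isOpen_lt (continuous_apply 0) continuous_const)))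
  have hvolST : volume {z : EuclideanSpace ℝ (Fin (m+2)) |
      ‖z‖ < 1 - Real.sqrt h ∧ Real.sqrt h < ⟪z, ν⟫ ∧ 0 < ⟪z, n⟫ ∧ ⟪z, n⟫ < h}
      = volume T := by
    have hmp : MeasurePreserving
        (fun z : EuclideanSpace ℝ (Fin (m+2)) =>
          (MeasurableEquiv.toLp 2 (Fin (m+2) → ℝ)).symm (b.repr z)) volume volume :=
      (EuclideanSpace.volume_preserving_symm_measurableEquiv_toLp _).comp b.measurePreserving_repr
    rw [← hmp.measure_preimage hTopen.measurableSet.nullMeasurableSet]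
    congr 1
    ext z
    have hcoord : ∀ i, (MeasurableEquiv.toLp 2 (Fin (m+2) → ℝ)).symm (b.repr z) i
        = b.repr z i := fun _ => rfl
    have hrepr0 : b.repr z 0 = ⟪z, n⟫ := by rw [b.repr_apply_apply, hb0, real_inner_comm]
    have hrepr1 : b.repr z 1 = ⟪z, ν⟫ := by rw [b.repr_apply_apply, hb1, real_inner_comm]
    have hnorm : ‖z‖ < 1 - s ↔ (∑ i, (b.repr z i) ^ 2) < (1 - s) ^ 2 := by
      constructor
      · intro hz
        have h1s : (0:ℝ) < 1 - s := by linarith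
        rw [← b.repr.norm_map z, EuclideanSpace.norm_eq, Real.sqrt_lt' h1s] at hz
        simpa [Real.norm_eq_abs, sq_abs] using hz
      · intro hz
        have h1s : (0:ℝ) < 1 - s := by linarith
        rw [← b.repr.norm_map z, EuclideanSpace.norm_eq, Real.sqrt_lt' h1s]
        simpa [Real.norm_eq_abs, sq_abs] using hz
    simp only [Set.mem_preimage, Set.mem_setOf_eq, hTdef, hcoord, hrepr0, hrepr1,
      ← hsdef, hnorm]
  rw [hvolST]
  set t := (volume T).toReal with htdef
  have hTsubBall : T ⊆ ballS (m+2) 1 := by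
    intro x hx
    have : (∑ i, x i ^ 2) < (1 - s) ^ 2 := hx.1
    show (∑ i, x i ^ 2) < 1 ^ 2
    nlinarith
  have hTfin : volume T ≠ ⊤ :=
    ne_top_of_le_ne_top (vol_ballS_ne_top (m+2) 1 one_pos) (measure_mono hTsubBall)
  have ht0 : 0 ≤ t := ENNReal.toReal_nonneg
  have htΩ : t ≤ Ω := by
    rw [htdef, hΩdef, ← vol_ballS (m+2) 1 one_pos]
    exact ENNReal.toReal_mono (vol_ballS_ne_top (m+2) 1 one_pos) (measure_mono hTsubBall)
  have h32 : h ^ ((3:ℝ)/2) = h * s := by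
    rw [show (3:ℝ)/2 = 1 + 1/2 by norm_num, Real.rpow_add hh0, Real.rpow_one,
      hsdef, Real.sqrt_eq_rpow]
  rw [h32]
  by_cases hq : h < 1/4
  · -- main case
    have hs12 : s < 1/2 := by
      rw [hsdef, show (1:ℝ)/2 = Real.sqrt (1/4) by
        rw [show (1/4:ℝ) = (1/2)^2 by norm_num, Real.sqrt_sq (by norm_num)]]
      exact Real.sqrt_lt_sqrt hh0.le hq
    set ρ := Real.sqrt (1 - 2*s) with hρdef
    have hρ2 : ρ ^ 2 = 1 - 2*s := Real.sq_sqrt (by linarith)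
    have hρ0 : 0 < ρ := Real.sqrt_pos.mpr (by linarith)
    have hρ1 : ρ ≤ 1 := by nlinarith [hρ2, hρ0, hs0]
    set D1 := {y : Fin (m+1) → ℝ | (∑ i, y i ^ 2) < 1 ^ 2 ∧ s < y 0} with hD1def
    set Dρ := {y : Fin (m+1) → ℝ | (∑ i, y i ^ 2) < ρ ^ 2 ∧ s < y 0} with hDρdef
    set P1 := {y : Fin (m+1) → ℝ | (∑ i, y i ^ 2) < 1 ^ 2 ∧ 0 < y 0} with hP1def
    set Pρ := {y : Fin (m+1) → ℝ | (∑ i, y i ^ 2) < ρ ^ 2 ∧ 0 < y 0} with hPρdef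
    set Slab := (MeasurableEquiv.piFinSuccAbove (fun _ : Fin (m+1) => ℝ) 0) ⁻¹'
      ((Set.Ioc 0 s) ×ˢ ballS m 1) with hSlabdef
    -- upper bound
    have hTsub : T ⊆ (MeasurableEquiv.piFinSuccAbove (fun _ : Fin (m+2) => ℝ) 0) ⁻¹'
        ((Set.Ioo 0 h) ×ˢ D1) := by
      intro x hx
      obtain ⟨hx1, hx2, hx3, hx4⟩ := hx
      simp only [Set.mem_preimage, piFinSuccAbove_zero_apply, Set.mem_prod, Set.mem_Ioo,
        hD1def, Set.mem_setOf_eq]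
      refine ⟨⟨hx3, hx4⟩, ?_, ?_⟩
      · have hsum := Fin.sum_univ_succ (fun i => x i ^ 2)
        nlinarith [sq_nonneg (x 0)]
      · have e1 : x (0 : Fin (m+1)).succ = x 1 := by norm_num
        rw [e1]; exact hx2
    have hub : volume T ≤ ENNReal.ofReal h * volume P1 := by
      calc volume T ≤ volume ((MeasurableEquiv.piFinSuccAbove (fun _ : Fin (m+2) => ℝ) 0) ⁻¹'
          ((Set.Ioo 0 h) ×ˢ D1)) := measure_mono hTsub
      _ = volume (Set.Ioo (0:ℝ) h) * volume D1 :=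
          prodvol (m+1) _ _ measurableSet_Ioo (Dopen m 1 s).measurableSet
      _ = ENNReal.ofReal h * volume D1 := by rw [Real.volume_Ioo, sub_zero]
      _ ≤ ENNReal.ofReal h * volume P1 := by
          apply mul_le_mul_right
          apply measure_mono
          rintro y ⟨hy1, hy2⟩
          exact ⟨hy1, lt_trans hs0 hy2⟩
    -- lower bound
    have hlbsub : (MeasurableEquiv.piFinSuccAbove (fun _ : Fin (m+2) => ℝ) 0) ⁻¹'
        ((Set.Ioo 0 h) ×ˢ Dρ) ⊆ T := by
      intro x hx
      simp only [Set.mem_preimage, piFinSuccAbove_zero_apply, Set.mem_prod, Set.mem_Ioo,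
        hDρdef, Set.mem_setOf_eq] at hx
      obtain ⟨⟨ha, hb'⟩, hsum, hy0⟩ := hx
      refine ⟨?_, ?_, ha, hb'⟩
      · have htot := Fin.sum_univ_succ (fun i => x i ^ 2)
        nlinarith
      · have e1 : x (0 : Fin (m+1)).succ = x 1 := by norm_num
        rw [← e1]; exact hy0
    have hlb : ENNReal.ofReal h * volume Dρ ≤ volume T := by
      have hIoo : ENNReal.ofReal h = volume (Set.Ioo (0:ℝ) h) := by
        rw [Real.volume_Ioo, sub_zero]
      rw [hIoo, ← prodvol (m+1) _ _ measurableSet_Ioo (Dopen m ρ s).measurableSet]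
      exact measure_mono hlbsub
    -- slab
    have hPsub : Pρ ⊆ Dρ ∪ Slab := by
      intro y hy
      obtain ⟨hsum, hy0⟩ := hy
      by_cases hc : s < y 0
      · exact Or.inl ⟨hsum, hc⟩
      · right
        simp only [hSlabdef, Set.mem_preimage, piFinSuccAbove_zero_apply, Set.mem_prod,
          Set.mem_Ioc, ballS, Set.mem_setOf_eq]
        refine ⟨⟨hy0, not_lt.mp hc⟩, ?_⟩
        have htot := Fin.sum_univ_succ (fun i => y i ^ 2)
        show (∑ i : Fin m, y i.succ ^ 2) < 1 ^ 2
        nlinarith [sq_nonneg (y 0)]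
    have hSlabvol : volume Slab = ENNReal.ofReal s * volume (ballS m 1) := by
      rw [hSlabdef, prodvol m _ _ measurableSet_Ioc (ballS_open m 1).measurableSet,
        Real.volume_Ioc, sub_zero]
    -- finiteness
    have hP1fin : volume P1 ≠ ⊤ :=
      ne_top_of_le_ne_top (vol_ballS_ne_top (m+1) 1 one_pos)
        (measure_mono (fun y hy => hy.1))
    have hPρfin : volume Pρ ≠ ⊤ :=
      ne_top_of_le_ne_top (vol_ballS_ne_top (m+1) ρ hρ0)
        (measure_mono (fun y hy => hy.1))
    have hDρfin : volume Dρ ≠ ⊤ :=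
      ne_top_of_le_ne_top (vol_ballS_ne_top (m+1) ρ hρ0)
        (measure_mono (fun y hy => hy.1))
    have hSlabfin : volume Slab ≠ ⊤ := by
      rw [hSlabvol]
      exact ENNReal.mul_ne_top ENNReal.ofReal_ne_top (vol_ballS_ne_top m 1 one_pos)
    -- half-ball values
    have hp1 : (volume P1).toReal = ω / 2 := by
      have hhv := halfvol m 1
      have := congrArg ENNReal.toReal hhv
      rw [ENNReal.toReal_add hP1fin hP1fin, vol_ballS (m+1) 1 one_pos] at this
      rw [← hωdef] at this
      linarith
    have hpρ : (volume Pρ).toReal = ρ ^ (m+1) * ω / 2 := by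
      have hhv := halfvol m ρ
      have := congrArg ENNReal.toReal hhv
      rw [ENNReal.toReal_add hPρfin hPρfin, vol_ballS (m+1) ρ hρ0,
        vol_ball_scale (m+1) (Nat.succ_pos m) ρ hρ0] at this
      rw [← hωdef] at this
      linarith
    -- real bounds
    have hup : t ≤ h * (ω / 2) := by
      have := ENNReal.toReal_mono (ENNReal.mul_ne_top ENNReal.ofReal_ne_top hP1fin) hub
      rwa [ENNReal.toReal_mul, ENNReal.toReal_ofReal hh0.le, hp1] at this
    have hlo : h * (volume Dρ).toReal ≤ t := by
      have := ENNReal.toReal_mono hTfin hlb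
      rwa [ENNReal.toReal_mul, ENNReal.toReal_ofReal hh0.le] at this
    have hdρ : ρ ^ (m+1) * ω / 2 ≤ (volume Dρ).toReal + s * W := by
      have hle : volume Pρ ≤ volume Dρ + volume Slab :=
        le_trans (measure_mono hPsub) (measure_union_le _ _)
      have := ENNReal.toReal_mono (ENNReal.add_ne_top.mpr ⟨hDρfin, hSlabfin⟩) hle
      rwa [ENNReal.toReal_add hDρfin hSlabfin, hSlabvol, ENNReal.toReal_mul,
        ENNReal.toReal_ofReal hs0.le, ← hWdef, hpρ] at this
    -- Bernoulli
    have hber : 1 - 2*((m:ℝ)+1)*s ≤ ρ ^ (m+1) := by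
      have b1 : (1:ℝ) + (m+1 : ℕ) * (-2*s) ≤ (1 + (-2*s)) ^ (m+1) :=
        one_add_mul_le_pow (by linarith) (m+1)
      have b2 : ((1:ℝ) + (-2*s)) ^ (m+1) = (ρ^2) ^ (m+1) := by rw [hρ2]; ring_nf
      have b3 : ((ρ:ℝ)^2) ^ (m+1) = ρ ^ (2*(m+1)) := by rw [← pow_mul]
      have b4 : (ρ:ℝ) ^ (2*(m+1)) ≤ ρ ^ (m+1) :=
        pow_le_pow_of_le_one hρ0.le hρ1 (by omega)
      push_cast at b1
      nlinarith [b1, b2, b3, b4]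
    have hdρ2 : ω/2 - ((m:ℝ)+1)*s*ω - s*W ≤ (volume Dρ).toReal := by
      have := mul_le_mul_of_nonneg_right hber (by linarith : (0:ℝ) ≤ ω/2)
      nlinarith [hdρ]
    have hlo2 : h * (ω/2 - ((m:ℝ)+1)*s*ω - s*W) ≤ t :=
      le_trans (mul_le_mul_of_nonneg_left hdρ2 hh0.le) hlo
    rw [abs_le]
    constructor
    · nlinarith [mul_nonneg (mul_nonneg hΩ0 hh0.le) hs0.le,
        mul_nonneg hh0.le hs0.le, mul_nonneg (mul_nonneg hω0 hh0.le) hs0.le]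
    · nlinarith [mul_nonneg hh0.le hs0.le, mul_nonneg hW0 (mul_nonneg hh0.le hs0.le),
        mul_nonneg (mul_nonneg (by positivity : (0:ℝ) ≤ (m:ℝ)+1) hω0)
          (mul_nonneg hh0.le hs0.le), mul_nonneg hΩ0 (mul_nonneg hh0.le hs0.le),
        mul_nonneg hω0 (mul_nonneg hh0.le hs0.le)]
  · -- crude case h ≥ 1/4
    push_neg at hq
    have hs12 : 1/2 ≤ s := by
      rw [hsdef, show (1:ℝ)/2 = Real.sqrt (1/4) by
        rw [show (1/4:ℝ) = (1/2)^2 by norm_num, Real.sqrt_sq (by norm_num)]]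
      exact Real.sqrt_le_sqrt hq
    have h18 : (1:ℝ)/8 ≤ h * s := by nlinarith
    have habs : |t - h * ω / 2| ≤ Ω + ω := by
      rw [abs_le]
      constructor <;> nlinarith
    refine le_trans habs ?_
    have e1 : Ω + ω ≤ 8*(Ω+ω) * (h*s) := by
      nlinarith [mul_nonneg (by linarith : (0:ℝ) ≤ 8*(Ω+ω)) (by linarith : (0:ℝ) ≤ h*s - 1/8)]
    have e2 : 8*(Ω+ω) * (h*s) ≤ ((((m:ℝ)+1)*ω + W) + 8*(Ω + ω)) * (h*s) := by
      nlinarith [mul_nonneg (by positivity : (0:ℝ) ≤ ((m:ℝ)+1)*ω + W)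
        (by nlinarith : (0:ℝ) ≤ h*s)]
    linarith

theorem stmt19 (d : ℕ) :
    ∃ C : ℝ, ∀ (n ν : EuclideanSpace ℝ (Fin d)),
      ‖n‖ = 1 → ‖ν‖ = 1 → ⟪n, ν⟫ = 0 →
      ∀ h ∈ Set.Ioo (0:ℝ) 1,
        |(volume {z : EuclideanSpace ℝ (Fin d) |
            ‖z‖ < 1 - Real.sqrt h ∧ Real.sqrt h < ⟪z, ν⟫ ∧
              0 < ⟪z, n⟫ ∧ ⟪z, n⟫ < h}).toReal -
          h * (Real.pi ^ ((d - 1 : ℝ) / 2) /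
            Real.Gamma ((d - 1 : ℝ) / 2 + 1)) / 2| ≤
        C * h ^ ((3:ℝ) / 2) := by
  rcases Nat.lt_or_ge d 2 with hd | hd
  · refine ⟨0, fun n ν hn hν hnν => absurd ?_ (by omega : ¬ (2 ≤ d))⟩
    have horth : Orthonormal ℝ ![n, ν] := by
      rw [orthonormal_iff_ite]
      intro i j
      fin_cases i <;> fin_cases j <;>
        simp [hnν, real_inner_comm n ν, real_inner_self_eq_norm_mul_norm, hn, hν,
          -PiLp.inner_apply]
    have := horth.linearIndependent.fintype_card_le_finrank
    rw [finrank_euclideanSpace_fin] at this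
    simpa using this
  · obtain ⟨m, rfl⟩ : ∃ m, d = m + 2 := ⟨d - 2, by omega⟩
    exact stmt19_key m
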